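/- Let μ, weights w_{1,a}, w_{2,b}, compositions n₁, n₂, weighted strings ξ₁, ξ₂ and the moment matrix g be as in the standard setup, with x ↦ x^m w_{1,a}(x) w_{2,b}(x) μ-integrable for all m, a, b. Let S̄' be a semi-infinite upper triangular real matrix (S̄'_{j,l} = 0 for j > l) such that gS̄' is lower triangular, i.e. Σ_{j=0}^{l} g_{i,j} S̄'_{j,l} = 0 for all i < l. Define the dual linear form Q̄^{(l)}(x) = Σ_{j=0}^{l} S̄'_{j,l} ξ₂^{(j)}(x). Then for every a ∈ {1,…,p₁} and every integer k with 0 ≤ k ≤ ν_{1,a}(l−1) − 1, where ν_{1,a}(l−1) := #{i : 0 ≤ i ≤ l−1, a₁(i) = a}, one has ∫ Q̄^{(l)}(x) w_{1,a}(x) x^k dμ(x) = 0. -/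

import Mathlib

open MeasureTheory

private lemma off_mono {p : ℕ} (n : Fin p → ℕ) {a b : Fin p} (hab : a < b) :
    (∑ i ∈ Finset.univ.filter (fun i => i < a), n i) + n a
      ≤ ∑ i ∈ Finset.univ.filter (fun i => i < b), n i := by
  have hnot : a ∉ Finset.univ.filter (fun i => i < a) := by simp
  have hsub : insert a (Finset.univ.filter (fun i => i < a))
      ⊆ Finset.univ.filter (fun i => i < b) := by
    intro x hx
    simp only [Finset.mem_insert, Finset.mem_filter, Finset.mem_univ, true_and] at hx ⊢
    rcases hx with rfl | hx
    · exact hab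
    · exact hx.trans hab
  calc (∑ i ∈ Finset.univ.filter (fun i => i < a), n i) + n a
      = ∑ i ∈ insert a (Finset.univ.filter (fun i => i < a)), n i := by
        rw [Finset.sum_insert hnot, add_comm]
    _ ≤ _ := Finset.sum_le_sum_of_subset hsub

private lemma off_add_le {p : ℕ} (n : Fin p → ℕ) (a : Fin p) :
    (∑ i ∈ Finset.univ.filter (fun i => i < a), n i) + n a ≤ ∑ b, n b := by
  have hnot : a ∉ Finset.univ.filter (fun i => i < a) := by simp
  calc (∑ i ∈ Finset.univ.filter (fun i => i < a), n i) + n a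
      = ∑ i ∈ insert a (Finset.univ.filter (fun i => i < a)), n i := by
        rw [Finset.sum_insert hnot, add_comm]
    _ ≤ _ := Finset.sum_le_sum_of_subset (Finset.subset_univ _)

private lemma decomp_unique {p : ℕ} (n : Fin p → ℕ)
    {k₁ k₂ : ℕ} {a₁ a₂ : Fin p} {r₁ r₂ : ℕ} (h₁ : r₁ < n a₁) (h₂ : r₂ < n a₂)
    (heq : k₁ * (∑ b, n b) + (∑ i ∈ Finset.univ.filter (fun i => i < a₁), n i) + r₁
         = k₂ * (∑ b, n b) + (∑ i ∈ Finset.univ.filter (fun i => i < a₂), n i) + r₂) :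
    k₁ = k₂ ∧ a₁ = a₂ ∧ r₁ = r₂ := by
  set N := ∑ b, n b with hN
  set o₁ := ∑ i ∈ Finset.univ.filter (fun i => i < a₁), n i with ho₁
  set o₂ := ∑ i ∈ Finset.univ.filter (fun i => i < a₂), n i with ho₂
  have hx₁ : o₁ + r₁ < N := lt_of_lt_of_le (by omega) (off_add_le n a₁)
  have hx₂ : o₂ + r₂ < N := lt_of_lt_of_le (by omega) (off_add_le n a₂)
  have hk : k₁ = k₂ := by
    rcases Nat.lt_trichotomy k₁ k₂ with h | h | h
    · exfalso
      obtain ⟨t, rfl⟩ := Nat.exists_eq_add_of_lt h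
      have : (k₁ + t + 1) * N ≥ k₁ * N + N := by nlinarith
      omega
    · exact h
    · exfalso
      obtain ⟨t, rfl⟩ := Nat.exists_eq_add_of_lt h
      have : (k₂ + t + 1) * N ≥ k₂ * N + N := by nlinarith
      omega
  subst hk
  have hoo : o₁ + r₁ = o₂ + r₂ := by omega
  have ha : a₁ = a₂ := by
    rcases lt_trichotomy a₁ a₂ with h | h | h
    · exfalso
      have := off_mono n h
      omega
    · exact h
    · exfalso
      have := off_mono n h
      omega
  subst ha
  refine ⟨rfl, rfl, by omega⟩


/-- Orthogonality relations for the dual linear forms `Q̄⁽ˡ⁾ = Σ_{j≤l} S̄′_{j,l} ξ₂⁽ʲ⁾`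
coming from an upper triangular `S̄′` making `gS̄′` lower triangular:
`∫ Q̄⁽ˡ⁾(x) w_{1,a}(x) xᵏ dμ = 0` for `0 ≤ k ≤ ν_{1,a}(l−1) − 1`. -/
theorem stmt_10
    (μ : Measure ℝ) [IsFiniteMeasure μ]
    (p₁ p₂ : ℕ) (hp₁ : 1 ≤ p₁) (hp₂ : 1 ≤ p₂)
    (n₁ : Fin p₁ → ℕ) (hn₁ : ∀ a, 1 ≤ n₁ a)
    (n₂ : Fin p₂ → ℕ) (hn₂ : ∀ b, 1 ≤ n₂ b)
    (w₁ : Fin p₁ → ℝ → ℝ) (w₂ : Fin p₂ → ℝ → ℝ)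
    (hw₁ : ∀ a, Measurable (w₁ a)) (hw₂ : ∀ b, Measurable (w₂ b))
    (hint : ∀ (m : ℕ) (a : Fin p₁) (b : Fin p₂),
      Integrable (fun x => x ^ m * w₁ a x * w₂ b x) μ)
    (kk₁ : ℕ → ℕ) (aa₁ : ℕ → Fin p₁) (rr₁ : ℕ → ℕ)
    (hdec₁ : ∀ l, rr₁ l < n₁ (aa₁ l) ∧
      l = kk₁ l * (∑ b, n₁ b) +
          (∑ i ∈ Finset.univ.filter (fun i => i < aa₁ l), n₁ i) + rr₁ l)
    (kk₂ : ℕ → ℕ) (aa₂ : ℕ → Fin p₂) (rr₂ : ℕ → ℕ)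
    (hdec₂ : ∀ l, rr₂ l < n₂ (aa₂ l) ∧
      l = kk₂ l * (∑ b, n₂ b) +
          (∑ i ∈ Finset.univ.filter (fun i => i < aa₂ l), n₂ i) + rr₂ l)
    (ξ₁ : ℕ → ℝ → ℝ)
    (hξ₁ : ∀ i x, ξ₁ i x = w₁ (aa₁ i) x * x ^ (kk₁ i * n₁ (aa₁ i) + rr₁ i))
    (ξ₂ : ℕ → ℝ → ℝ)
    (hξ₂ : ∀ j x, ξ₂ j x = w₂ (aa₂ j) x * x ^ (kk₂ j * n₂ (aa₂ j) + rr₂ j))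
    (g : ℕ → ℕ → ℝ)
    (hg : ∀ i j, g i j = ∫ x, ξ₁ i x * ξ₂ j x ∂μ)
    (Sbar' : ℕ → ℕ → ℝ)
    (hSbar'_tri : ∀ j l, l < j → Sbar' j l = 0)
    (hgSbar'_lower : ∀ l i, i < l → ∑ j ∈ Finset.range (l + 1), g i j * Sbar' j l = 0)
    (Qbar : ℕ → ℝ → ℝ)
    (hQbar : ∀ l x, Qbar l x = ∑ j ∈ Finset.range (l + 1), Sbar' j l * ξ₂ j x)
    (l : ℕ) (a : Fin p₁) (k : ℕ)
    (hk : k < ((Finset.range l).filter (fun i => aa₁ i = a)).card) :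
    ∫ x, Qbar l x * w₁ a x * x ^ k ∂μ = 0 := by
  have hm : 0 < n₁ a := hn₁ a
  have hmN : n₁ a ≤ ∑ b, n₁ b := le_trans (by omega) (off_add_le n₁ a)
  set N := ∑ b, n₁ b with hN
  set f : ℕ → ℕ := fun d =>
    (d / n₁ a) * N + (∑ i ∈ Finset.univ.filter (fun i => i < a), n₁ i) + d % n₁ a with hf
  -- f is strictly monotone
  have hfmono : StrictMono f := by
    intro d e hde
    have h1 : d % n₁ a < n₁ a := Nat.mod_lt _ hm
    have h4 : e % n₁ a < n₁ a := Nat.mod_lt _ hm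
    have hq : d / n₁ a ≤ e / n₁ a := Nat.div_le_div_right hde.le
    show (d / n₁ a) * N + _ + d % n₁ a < (e / n₁ a) * N + _ + e % n₁ a
    rcases eq_or_lt_of_le hq with hq' | hq'
    · rw [← hq']
      have hd := Nat.div_add_mod d (n₁ a)
      have he := Nat.div_add_mod e (n₁ a)
      rw [← hq'] at he
      have hre : d % n₁ a < e % n₁ a := by
        set t := n₁ a * (d / n₁ a)
        omega
      exact Nat.add_lt_add_left hre _
    · have h2 : d / n₁ a * N + N ≤ e / n₁ a * N := by
        calc d / n₁ a * N + N = (d / n₁ a + 1) * N := by ring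
          _ ≤ e / n₁ a * N := Nat.mul_le_mul_right N hq'
      have h3 : d % n₁ a < N := lt_of_lt_of_le h1 hmN
      calc (d / n₁ a) * N + (∑ i ∈ Finset.univ.filter (fun i => i < a), n₁ i) + d % n₁ a
          < (d / n₁ a) * N + (∑ i ∈ Finset.univ.filter (fun i => i < a), n₁ i) + N :=
            Nat.add_lt_add_left h3 _
        _ = (d / n₁ a * N + N) + (∑ i ∈ Finset.univ.filter (fun i => i < a), n₁ i) := by ring
        _ ≤ e / n₁ a * N + (∑ i ∈ Finset.univ.filter (fun i => i < a), n₁ i) :=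
            Nat.add_le_add_right h2 _
        _ ≤ _ := Nat.le_add_right _ _
  -- decomposition data of f d
  have hfd : ∀ d : ℕ, aa₁ (f d) = a ∧ kk₁ (f d) = d / n₁ a ∧ rr₁ (f d) = d % n₁ a := by
    intro d
    obtain ⟨hr, hdec⟩ := hdec₁ (f d)
    have heq : kk₁ (f d) * (∑ b, n₁ b) +
        (∑ i ∈ Finset.univ.filter (fun i => i < aa₁ (f d)), n₁ i) + rr₁ (f d)
      = (d / n₁ a) * (∑ b, n₁ b) +
        (∑ i ∈ Finset.univ.filter (fun i => i < a), n₁ i) + d % n₁ a := by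
      rw [← hdec]
    obtain ⟨hkk, haa, hrr⟩ := decomp_unique n₁ hr (Nat.mod_lt d hm) heq
    exact ⟨haa, hkk, hrr⟩
  -- every index with block a is in the range of f
  have hfi : ∀ i, aa₁ i = a → f (kk₁ i * n₁ a + rr₁ i) = i := by
    intro i hia
    obtain ⟨hr, hdec⟩ := hdec₁ i
    rw [hia] at hr hdec
    have hdiv : (kk₁ i * n₁ a + rr₁ i) / n₁ a = kk₁ i := by
      rw [add_comm, Nat.add_mul_div_right _ _ hm, Nat.div_eq_of_lt hr]
      omega
    have hmod : (kk₁ i * n₁ a + rr₁ i) % n₁ a = rr₁ i := by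
      rw [add_comm, Nat.add_mul_mod_self_right, Nat.mod_eq_of_lt hr]
    show (kk₁ i * n₁ a + rr₁ i) / n₁ a * N +
        (∑ i ∈ Finset.univ.filter (fun i => i < a), n₁ i) +
        (kk₁ i * n₁ a + rr₁ i) % n₁ a = i
    rw [hdiv, hmod]
    exact hdec.symm
  -- f k < l
  have hi₀l : f k < l := by
    by_contra h
    push_neg at h
    have hcard : ((Finset.range l).filter (fun i => aa₁ i = a)).card ≤ (Finset.range k).card := by
      apply Finset.card_le_card_of_injOn (fun i => kk₁ i * n₁ a + rr₁ i)
      · intro i hi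
        simp only [Finset.mem_coe, Finset.mem_filter, Finset.mem_range] at hi ⊢
        have hfieq := hfi i hi.2
        have hlt : f (kk₁ i * n₁ a + rr₁ i) < f k := by
          rw [hfieq]; exact lt_of_lt_of_le hi.1 h
        exact hfmono.lt_iff_lt.mp hlt
      · intro i hi j hj hij
        simp only [Finset.mem_coe, Finset.mem_filter, Finset.mem_range] at hi hj
        have hij' : kk₁ i * n₁ a + rr₁ i = kk₁ j * n₁ a + rr₁ j := hij
        rw [← hfi i hi.2, ← hfi j hj.2, hij']
    rw [Finset.card_range] at hcard
    omega
  obtain ⟨haa, hkk, hrr⟩ := hfd k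
  have hdeg : kk₁ (f k) * n₁ a + rr₁ (f k) = k := by
    rw [hkk, hrr]
    exact Nat.div_add_mod' k (n₁ a)
  have hxi : ∀ x, ξ₁ (f k) x = w₁ a x * x ^ k := by
    intro x; rw [hξ₁, haa, hdeg]
  -- integrability of each summand
  have hint' : ∀ j, Integrable (fun x => Sbar' j l * ξ₂ j x * w₁ a x * x ^ k) μ := by
    intro j
    have hfun : (fun x => Sbar' j l * ξ₂ j x * w₁ a x * x ^ k)
        = fun x => Sbar' j l *
            (x ^ (k + (kk₂ j * n₂ (aa₂ j) + rr₂ j)) * w₁ a x * w₂ (aa₂ j) x) := by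
      funext x; rw [hξ₂]; ring
    rw [hfun]
    exact (hint _ a (aa₂ j)).const_mul _
  calc ∫ x, Qbar l x * w₁ a x * x ^ k ∂μ
      = ∫ x, ∑ j ∈ Finset.range (l + 1), Sbar' j l * ξ₂ j x * w₁ a x * x ^ k ∂μ := by
        congr 1; funext x
        rw [hQbar, Finset.sum_mul, Finset.sum_mul]
    _ = ∑ j ∈ Finset.range (l + 1), ∫ x, Sbar' j l * ξ₂ j x * w₁ a x * x ^ k ∂μ :=
        integral_finset_sum _ (fun j _ => hint' j)
    _ = ∑ j ∈ Finset.range (l + 1), g (f k) j * Sbar' j l := by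
        refine Finset.sum_congr rfl fun j _ => ?_
        rw [hg, mul_comm, ← integral_const_mul]
        congr 1; funext x
        rw [hxi]; ring
    _ = 0 := hgSbar'_lower l (f k) hi₀l
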